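/- arXiv:2507.15781 — 3 statements merged into one kernel-verified Lean document; each statement's English description precedes it below -/
import Mathlib

section
/- Let a : ℝ → ℝ be continuous and 2π-periodic with ∫_{-π}^{π} a(s) ds = 0, let A ∈ ℝ, and let y : ℝ → ℝ be differentiable and 2π-periodic with y'(x) = a(x)·y(x) + A for all x ∈ ℝ. Then A = 0 and y(x) = y(0)·exp(∫_0^x a(s) ds) for all x ∈ ℝ. -/
open Set

/-- Rigidity of periodic solutions to `y' = a y + A` with `a` continuous,
`2π`-periodic, of zero mean: periodicity of `y` forces `A = 0` and
`y(x) = y(0) exp(∫₀ˣ a)`. -/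
theorem stmt_5 (a : ℝ → ℝ) (ha : Continuous a) (hap : ∀ x, a (x + 2 * Real.pi) = a x)
    (hai : (∫ s in (-Real.pi)..Real.pi, a s) = 0) (A : ℝ) (y : ℝ → ℝ)
    (hy : ∀ x, HasDerivAt y (a x * y x + A) x)
    (hyp : ∀ x, y (x + 2 * Real.pi) = y x) :
    A = 0 ∧ ∀ x, y x = y 0 * Real.exp (∫ s in (0 : ℝ)..x, a s) := by
  set F : ℝ → ℝ := fun x => ∫ s in (0 : ℝ)..x, a s with hFdef
  have hF : ∀ x, HasDerivAt F (a x) x := fun x =>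
    (ha.integral_hasStrictDerivAt 0 x).hasDerivAt
  have hFdiff : Differentiable ℝ F := fun x => (hF x).differentiableAt
  have hFc : Continuous F := hFdiff.continuous
  -- F is 2π-periodic
  have haP : Function.Periodic a (2 * Real.pi) := hap
  have hFp : ∀ x, F (x + 2 * Real.pi) = F x := by
    intro x
    have hint : ∀ t₁ t₂ : ℝ, IntervalIntegrable a MeasureTheory.volume t₁ t₂ := fun t₁ t₂ =>
      ha.intervalIntegrable t₁ t₂
    have h1 : F (x + 2 * Real.pi) = F x + ∫ s in x..x + 2 * Real.pi, a s := by
      rw [hFdef]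
      simp only
      rw [← intervalIntegral.integral_add_adjacent_intervals (hint 0 x) (hint x (x + 2 * Real.pi))]
    have h2 : (∫ s in x..x + 2 * Real.pi, a s) = ∫ s in (-Real.pi)..(-Real.pi + 2 * Real.pi), a s :=
      haP.intervalIntegral_add_eq x (-Real.pi)
    have h3 : -Real.pi + 2 * Real.pi = Real.pi := by ring
    rw [h1, h2, h3, hai, add_zero]
  -- G = y * exp(-F)
  set G : ℝ → ℝ := fun x => y x * Real.exp (-F x) with hGdef
  have hG : ∀ x, HasDerivAt G (A * Real.exp (-F x)) x := by
    intro x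
    have h1 : HasDerivAt (fun x => Real.exp (-F x)) (Real.exp (-F x) * (-a x)) x :=
      by
        have hn : HasDerivAt (fun x => -F x) (-a x) x := (hF x).neg
        exact (Real.hasDerivAt_exp (-F x)).comp x hn
    have : HasDerivAt (fun z => y z * Real.exp (-F z))
        ((a x * y x + A) * Real.exp (-F x) + y x * (Real.exp (-F x) * -a x)) x := (hy x).mul h1
    convert this using 1
    ring
  have hGp : G (2 * Real.pi) = G 0 := by
    have := hFp 0
    have := hyp 0
    simp only [hGdef, zero_add] at *
    rw [show (2 : ℝ) * Real.pi = 0 + 2 * Real.pi by ring, hyp 0, hFp 0]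
  -- FTC : ∫ G' = G(2π) - G(0) = 0
  have hcontI : Continuous fun x => A * Real.exp (-F x) :=
    continuous_const.mul ((hFc.neg).rexp)
  have hFTC : (∫ x in (0 : ℝ)..(2 * Real.pi), A * Real.exp (-F x)) = G (2 * Real.pi) - G 0 :=
    intervalIntegral.integral_eq_sub_of_hasDerivAt (fun x _ => hG x)
      (hcontI.intervalIntegrable _ _)
  rw [hGp, sub_self] at hFTC
  rw [intervalIntegral.integral_const_mul] at hFTC
  have hpos : 0 < ∫ x in (0 : ℝ)..(2 * Real.pi), Real.exp (-F x) :=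
    intervalIntegral.intervalIntegral_pos_of_pos
      (((hFc.neg).rexp).intervalIntegrable _ _)
      (fun x => Real.exp_pos _) (by positivity)
  have hA : A = 0 := by
    rcases mul_eq_zero.mp hFTC with h | h
    · exact h
    · exact absurd h (ne_of_gt hpos)
  refine ⟨hA, fun x => ?_⟩
  -- with A = 0, G is constant
  have hG0 : ∀ x, HasDerivAt G 0 x := by
    intro x
    have := hG x
    rw [hA, zero_mul] at this
    exact this
  have hconst : G x = G 0 := by
    have := is_const_of_deriv_eq_zero (f := G) (fun z => (hG0 z).differentiableAt)
      (fun z => (hG0 z).deriv) x 0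
    exact this
  have h0 : G 0 = y 0 := by
    simp [hGdef, hFdef]
  have : y x * Real.exp (-F x) = y 0 := by rw [← h0, ← hconst]
  have hx : y x = y 0 * Real.exp (F x) := by
    have := congrArg (fun t => t * Real.exp (F x)) this
    simpa [mul_assoc, ← Real.exp_add] using this
  exact hx
end

section
/- Let D > 0, Φ > 0, and let g : ℝ → ℝ be continuous, 2π-periodic, with ∫_{-π}^{π} g(s) ds = 0. Define h(x) = exp((1/D)·∫_0^x g(s) ds) and η̄(x) = Φ·h(x)/(∫_{-π}^{π} h(s) ds). Then: (i) η̄ is 2π-periodic, strictly positive, satisfies D·η̄'(x) = g(x)·η̄(x) for all x ∈ ℝ, and ∫_{-π}^{π} η̄(x) dx = Φ; (ii) conversely, if y : ℝ → ℝ is differentiable and 2π-periodic, satisfies D·y'(x) = g(x)·y(x) + A for all x ∈ ℝ for some constant A ∈ ℝ, and ∫_{-π}^{π} y(x) dx = Φ, then A = 0 and y(x) = η̄(x) for all x. -/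
open Set

/-- Appendix Theorem (steady state of the non-plastic followers), once-integrated
form: `η̄ = Φ h / ∫ h` with `h(x) = exp((1/D) ∫₀ˣ g)` is a `2π`-periodic, strictly
positive solution of `D η̄' = g η̄` of total mass `Φ`; conversely any `2π`-periodic
solution of `D y' = g y + A` of mass `Φ` has `A = 0` and equals `η̄`. -/
theorem stmt_6 (D Φ : ℝ) (hD : 0 < D) (hΦ : 0 < Φ)
    (g : ℝ → ℝ) (hg : Continuous g) (hgp : ∀ x, g (x + 2 * Real.pi) = g x)
    (hgi : (∫ s in (-Real.pi)..Real.pi, g s) = 0)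
    (h η : ℝ → ℝ)
    (hh : ∀ x, h x = Real.exp ((1 / D) * ∫ s in (0 : ℝ)..x, g s))
    (hη : ∀ x, η x = Φ * h x / ∫ s in (-Real.pi)..Real.pi, h s) :
    ((∀ x, η (x + 2 * Real.pi) = η x) ∧ (∀ x, 0 < η x) ∧
      (∀ x, HasDerivAt η (g x * η x / D) x) ∧
      (∫ x in (-Real.pi)..Real.pi, η x) = Φ) ∧
    (∀ (A : ℝ) (y : ℝ → ℝ),
      (∀ x, HasDerivAt y ((g x * y x + A) / D) x) →
      (∀ x, y (x + 2 * Real.pi) = y x) →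
      (∫ x in (-Real.pi)..Real.pi, y x) = Φ →
      A = 0 ∧ ∀ x, y x = η x) := by
  have hπ : (0:ℝ) < Real.pi := Real.pi_pos
  set G : ℝ → ℝ := fun x => ∫ s in (0:ℝ)..x, g s with hG
  have hgper : Function.Periodic g (2 * Real.pi) := hgp
  have hint : ∀ a b : ℝ, IntervalIntegrable g MeasureTheory.volume a b :=
    fun a b => hg.intervalIntegrable a b
  -- derivative of G
  have HG : ∀ x, HasDerivAt G (g x) x := by
    intro x
    exact intervalIntegral.integral_hasDerivAt_right (hint 0 x)
      (hg.stronglyMeasurableAtFilter _ _) hg.continuousAt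
  have hGc : Continuous G := by
    rw [continuous_iff_continuousAt]; exact fun x => (HG x).continuousAt
  -- periodicity of G
  have hGper : ∀ x, G (x + 2 * Real.pi) = G x := by
    intro x
    have : G (x + 2 * Real.pi) = G x + ∫ s in x..x + 2 * Real.pi, g s := by
      rw [hG]
      exact (intervalIntegral.integral_add_adjacent_intervals (hint 0 x)
        (hint x (x + 2 * Real.pi))).symm
    rw [this, hgper.intervalIntegral_add_eq x (-Real.pi)]
    have : -Real.pi + 2 * Real.pi = Real.pi := by ring
    rw [this, hgi, add_zero]
  -- h as a function
  have hfun : h = fun x => Real.exp ((1 / D) * G x) := funext hh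
  have hhpos : ∀ x, 0 < h x := fun x => by rw [hfun]; exact Real.exp_pos _
  have hhc : Continuous h := by
    rw [hfun]; exact (continuous_const.mul hGc).rexp
  have hhper : ∀ x, h (x + 2 * Real.pi) = h x := by
    intro x; rw [hfun]; simp [hGper x]
  have Hh : ∀ x, HasDerivAt h (g x * h x / D) x := by
    intro x
    have h1 : HasDerivAt (fun x => (1 / D) * G x) ((1 / D) * g x) x := (HG x).const_mul _
    have h2 := h1.exp
    rw [hfun]
    convert h2 using 1
    field_simp
  have hIpos : 0 < ∫ s in (-Real.pi)..Real.pi, h s :=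
    intervalIntegral.intervalIntegral_pos_of_pos (hhc.intervalIntegrable _ _)
      (fun x => hhpos x) (by linarith)
  set I : ℝ := ∫ s in (-Real.pi)..Real.pi, h s with hI
  have hηfun : η = fun x => Φ * h x / I := funext hη
  have hηper : ∀ x, η (x + 2 * Real.pi) = η x := by
    intro x; rw [hηfun]; simp [hhper x]
  have hηpos : ∀ x, 0 < η x := by
    intro x; rw [hηfun]
    exact div_pos (mul_pos hΦ (hhpos x)) hIpos
  have Hη : ∀ x, HasDerivAt η (g x * η x / D) x := by
    intro x
    have := ((Hh x).const_mul Φ).div_const I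
    rw [hηfun]
    refine this.congr_deriv ?_
    beta_reduce
    ring
  have hηmass : (∫ x in (-Real.pi)..Real.pi, η x) = Φ := by
    rw [hηfun]
    rw [intervalIntegral.integral_div, intervalIntegral.integral_const_mul, ← hI]
    field_simp
  refine ⟨⟨hηper, hηpos, Hη, hηmass⟩, ?_⟩
  intro A y hy hyper hymass
  -- w = y / h
  set w : ℝ → ℝ := fun x => y x * Real.exp (-((1 / D) * G x)) with hw
  have hyc : Continuous y := by
    rw [continuous_iff_continuousAt]; exact fun x => (hy x).continuousAt
  have Hw : ∀ x, HasDerivAt w ((A / D) * Real.exp (-((1 / D) * G x))) x := by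
    intro x
    have h1 : HasDerivAt (fun x => -((1 / D) * G x)) (-((1 / D) * g x)) x :=
      ((HG x).const_mul _).neg
    have h2 := (hy x).mul h1.exp
    refine h2.congr_deriv ?_
    ring
  have hwc : Continuous (fun x => (A / D) * Real.exp (-((1 / D) * G x))) :=
    continuous_const.mul ((continuous_const.mul hGc).neg.rexp)
  have hwint : ∀ a b : ℝ, w b - w a = ∫ x in a..b, (A / D) * Real.exp (-((1 / D) * G x)) := by
    intro a b
    exact (intervalIntegral.integral_eq_sub_of_hasDerivAt (fun x _ => Hw x)
      (hwc.intervalIntegrable a b)).symm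
  -- periodicity of w forces A = 0
  have hwper : w (0 + 2 * Real.pi) = w 0 := by
    rw [hw]; simp only [hyper 0, hGper 0]
  have hJpos : 0 < ∫ x in (0:ℝ)..(0 + 2 * Real.pi), Real.exp (-((1 / D) * G x)) :=
    intervalIntegral.intervalIntegral_pos_of_pos
      (((continuous_const.mul hGc).neg.rexp).intervalIntegrable _ _)
      (fun x => Real.exp_pos _) (by linarith)
  have hA : A = 0 := by
    have := hwint 0 (0 + 2 * Real.pi)
    rw [hwper, sub_self, intervalIntegral.integral_const_mul] at this
    have hAD : A / D = 0 := by
      by_contra hne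
      exact hne (by
        have := this.symm
        rcases mul_eq_zero.mp this with h' | h'
        · exact h'
        · exact absurd h' (ne_of_gt hJpos))
    field_simp at hAD
    simpa using hAD
  refine ⟨hA, ?_⟩
  -- w is constant
  have hwconst : ∀ x, w x = w 0 := by
    intro x
    have := hwint 0 x
    rw [hA] at this
    simp at this
    linarith [this]
  -- hence y = c * h
  have hyh : ∀ x, y x = w 0 * h x := by
    intro x
    have h1 : w x = w 0 := hwconst x
    rw [hw] at h1
    simp only at h1
    have h2 : y x = w 0 * Real.exp ((1 / D) * G x) := by
      have he : Real.exp (-((1 / D) * G x)) * Real.exp ((1 / D) * G x) = 1 := by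
        rw [← Real.exp_add]; simp
      calc y x = y x * (Real.exp (-((1 / D) * G x)) * Real.exp ((1 / D) * G x)) := by
            rw [he, mul_one]
        _ = (y x * Real.exp (-((1 / D) * G x))) * Real.exp ((1 / D) * G x) := by ring
        _ = w 0 * Real.exp ((1 / D) * G x) := by rw [h1]
    rw [h2, hfun]
  -- mass determines the constant
  have hmass2 : w 0 * I = Φ := by
    have : (∫ x in (-Real.pi)..Real.pi, y x)
        = ∫ x in (-Real.pi)..Real.pi, w 0 * h x := by
      apply intervalIntegral.integral_congr
      intro x _
      exact hyh x
    rw [this, intervalIntegral.integral_const_mul, ← hI] at hymass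
    exact hymass
  intro x
  rw [hyh x, hηfun]
  have : w 0 = Φ / I := by
    field_simp at hmass2 ⊢
    linarith [hmass2]
  rw [this]
  field_simp
end

section
/- Let β < 0, δ ≥ 0, K > 0, and let V : [0, ∞) → [0, ∞) be differentiable with V'(t) ≤ β·V(t) + δ·exp(-K·t)·√(V(t)) for all t ≥ 0. Then V(t) → 0 as t → ∞. -/
open Set Filter

/-- Comparison lemma (Lemma 4 of Maffettone et al. 2024): if
`V' ≤ β V + δ exp(-K t) √V` on `[0, ∞)` with `β < 0`, `δ ≥ 0`, `K > 0`, and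
`V ≥ 0`, then `V(t) → 0` as `t → ∞`. -/
theorem stmt_15 (β δ K : ℝ) (hβ : β < 0) (hδ : 0 ≤ δ) (hK : 0 < K)
    (V : ℝ → ℝ) (hVnn : ∀ t ≥ (0 : ℝ), 0 ≤ V t)
    (hVdiff : ∀ t ≥ (0 : ℝ), DifferentiableWithinAt ℝ V (Ici 0) t)
    (hineq : ∀ t ≥ (0 : ℝ), derivWithin V (Ici 0) t ≤
      β * V t + δ * Real.exp (-K * t) * Real.sqrt (V t)) :
    Tendsto V atTop (nhds 0) := by
  obtain ⟨lam, hlam_def⟩ : ∃ lam : ℝ, lam = max (β / 2) (-K) := ⟨_, rfl⟩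
  have hlam_neg : lam < 0 := hlam_def ▸ max_lt (by linarith) (by linarith)
  have hlam_ge : β / 2 ≤ lam := hlam_def ▸ le_max_left _ _
  have hlamK : -K ≤ lam := hlam_def ▸ le_max_right _ _
  obtain ⟨C, hC_def⟩ : ∃ C : ℝ, C = δ ^ 2 / (-2 * β) := ⟨_, rfl⟩
  have hCnn : 0 ≤ C := by
    rw [hC_def]; apply div_nonneg (sq_nonneg δ); linarith
  have hC2 : δ ^ 2 = C * (-2 * β) := by
    rw [hC_def, div_mul_cancel₀]
    intro h; apply absurd h; intro h'; nlinarith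
  obtain ⟨a, ha_def⟩ : ∃ a : ℝ, a = -lam - 2 * K := ⟨_, rfl⟩
  have ha : a < 0 := by
    have : -lam ≤ K := by linarith
    rw [ha_def]; linarith
  have ha' : a ≠ 0 := ne_of_lt ha
  -- pointwise bound on the right-hand side
  have key : ∀ t ≥ (0 : ℝ), β * V t + δ * Real.exp (-K * t) * Real.sqrt (V t) ≤
      lam * V t + C * Real.exp (-K * t) ^ 2 := by
    intro t ht
    have hx : Real.sqrt (V t) ^ 2 = V t := Real.sq_sqrt (hVnn t ht)
    have hxnn : 0 ≤ Real.sqrt (V t) := Real.sqrt_nonneg _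
    have hy : (0 : ℝ) < Real.exp (-K * t) := Real.exp_pos _
    have hC2y : δ ^ 2 * Real.exp (-K * t) ^ 2 = C * (-2 * β) * Real.exp (-K * t) ^ 2 := by
      rw [hC2]
    have h2β : (0 : ℝ) < -2 * β := by linarith
    have h5 : (-2 * β) * (δ * Real.exp (-K * t) * Real.sqrt (V t)) ≤
        (-2 * β) * ((-β / 2) * V t + C * Real.exp (-K * t) ^ 2) := by
      have hx2 : β ^ 2 * Real.sqrt (V t) ^ 2 = β ^ 2 * V t := by rw [hx]
      nlinarith [sq_nonneg (β * Real.sqrt (V t) + δ * Real.exp (-K * t)), hC2y, hx2]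
    have h6 : δ * Real.exp (-K * t) * Real.sqrt (V t) ≤
        (-β / 2) * V t + C * Real.exp (-K * t) ^ 2 :=
      (mul_le_mul_iff_right₀ h2β).mp h5
    have h7 : (β / 2) * V t ≤ lam * V t := mul_le_mul_of_nonneg_right hlam_ge (hVnn t ht)
    linarith
  -- the auxiliary function
  set F : ℝ → ℝ := fun t => Real.exp (-lam * t) * V t + C / (-a) * Real.exp (a * t)
    with hF_def
  have hVcont : ContinuousOn V (Ici 0) := fun t ht => (hVdiff t ht).continuousWithinAt
  have hFcont : ContinuousOn F (Ici 0) := by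
    apply ContinuousOn.add
    · exact (Real.continuous_exp.comp (continuous_const.mul continuous_id)).continuousOn.mul hVcont
    · exact (continuous_const.mul
        (Real.continuous_exp.comp (continuous_const.mul continuous_id))).continuousOn
  -- derivative computation on the interior
  have hFderiv : ∀ x ∈ interior (Ici (0 : ℝ)),
      HasDerivAt F (Real.exp (-lam * x) * (-lam) * V x
        + Real.exp (-lam * x) * deriv V x + C / (-a) * (Real.exp (a * x) * a)) x := by
    intro x hx
    rw [interior_Ici] at hx
    have hxnn : (0 : ℝ) ≤ x := le_of_lt hx
    have hmem : Ici (0 : ℝ) ∈ nhds x := Ici_mem_nhds hx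
    have hVd : DifferentiableAt ℝ V x := (hVdiff x hxnn).differentiableAt hmem
    have h1 : HasDerivAt (fun t => Real.exp (-lam * t)) (Real.exp (-lam * x) * (-lam)) x := by
      have := ((hasDerivAt_id x).const_mul (-lam)).exp
      simpa [mul_comm] using this
    have h2 : HasDerivAt (fun t => Real.exp (a * t)) (Real.exp (a * x) * a) x := by
      have := ((hasDerivAt_id x).const_mul a).exp
      simpa [mul_comm] using this
    exact (h1.mul hVd.hasDerivAt).add (h2.const_mul (C / (-a)))
  have hFdiff : DifferentiableOn ℝ F (interior (Ici (0 : ℝ))) :=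
    fun x hx => ((hFderiv x hx).differentiableAt).differentiableWithinAt
  have hFderiv_nonpos : ∀ x ∈ interior (Ici (0 : ℝ)), deriv F x ≤ 0 := by
    intro x hx
    rw [(hFderiv x hx).deriv]
    rw [interior_Ici] at hx
    have hxnn : (0 : ℝ) ≤ x := le_of_lt hx
    have hmem : Ici (0 : ℝ) ∈ nhds x := Ici_mem_nhds hx
    have hdw : derivWithin V (Ici 0) x = deriv V x := derivWithin_of_mem_nhds hmem
    have hVd : deriv V x ≤ lam * V x + C * Real.exp (-K * x) ^ 2 := by
      have := (hineq x hxnn).trans (key x hxnn)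
      rwa [hdw] at this
    have hE : (0 : ℝ) < Real.exp (-lam * x) := Real.exp_pos _
    have hexp : Real.exp (-lam * x) * Real.exp (-K * x) ^ 2 = Real.exp (a * x) := by
      rw [ha_def, sq, ← Real.exp_add, ← Real.exp_add]
      congr 1
      ring
    have h3 : Real.exp (-lam * x) * deriv V x ≤
        Real.exp (-lam * x) * (lam * V x) + C * Real.exp (a * x) := by
      have hmul := mul_le_mul_of_nonneg_left hVd (le_of_lt hE)
      calc Real.exp (-lam * x) * deriv V x
          ≤ Real.exp (-lam * x) * (lam * V x + C * Real.exp (-K * x) ^ 2) := hmul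
        _ = Real.exp (-lam * x) * (lam * V x)
            + C * (Real.exp (-lam * x) * Real.exp (-K * x) ^ 2) := by ring
        _ = Real.exp (-lam * x) * (lam * V x) + C * Real.exp (a * x) := by rw [hexp]
    have hdiv : a / (-a) = -1 := by rw [div_neg, div_self ha']
    have h4 : C / (-a) * (Real.exp (a * x) * a) = -(C * Real.exp (a * x)) := by
      calc C / (-a) * (Real.exp (a * x) * a) = C * Real.exp (a * x) * (a / (-a)) := by ring
        _ = -(C * Real.exp (a * x)) := by rw [hdiv]; ring
    rw [h4]
    nlinarith [h3]
  have hF_anti : AntitoneOn F (Ici (0 : ℝ)) :=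
    antitoneOn_of_deriv_nonpos (convex_Ici 0) hFcont hFdiff hFderiv_nonpos
  obtain ⟨M, hM_def⟩ : ∃ M : ℝ, M = V 0 + C / (-a) := ⟨_, rfl⟩
  have hbound : ∀ t ≥ (0 : ℝ), V t ≤ M * Real.exp (lam * t) := by
    intro t ht
    have hFt : F t ≤ F 0 := hF_anti (self_mem_Ici) ht ht
    have hF0 : F 0 = M := by
      rw [hM_def]; simp [hF_def]
    have hE : (0 : ℝ) < Real.exp (-lam * t) := Real.exp_pos _
    have hEpos : (0 : ℝ) < Real.exp (a * t) := Real.exp_pos _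
    have hCa : 0 ≤ C / (-a) := div_nonneg hCnn (by linarith)
    have h1 : Real.exp (-lam * t) * V t ≤ M := by
      have : Real.exp (-lam * t) * V t + C / (-a) * Real.exp (a * t) ≤ M := by
        rw [← hF0]; exact hFt
      nlinarith [mul_nonneg hCa (le_of_lt hEpos)]
    have h2 : Real.exp (-lam * t) * Real.exp (lam * t) = 1 := by
      rw [← Real.exp_add]; ring_nf; exact Real.exp_zero
    have hE2 : (0 : ℝ) < Real.exp (lam * t) := Real.exp_pos _
    have hmul := mul_le_mul_of_nonneg_right h1 (le_of_lt hE2)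
    have hid : V t = Real.exp (-lam * t) * V t * Real.exp (lam * t) := by
      rw [mul_comm (Real.exp (-lam * t)) (V t), mul_assoc, h2, mul_one]
    linarith [hmul, hid.ge, hid.le]
  have hlim : Tendsto (fun t => M * Real.exp (lam * t)) atTop (nhds 0) := by
    have h1 : Tendsto (fun t : ℝ => lam * t) atTop atBot := by
      exact tendsto_id.const_mul_atTop_of_neg hlam_neg
    have h2 : Tendsto (fun t : ℝ => Real.exp (lam * t)) atTop (nhds 0) :=
      Real.tendsto_exp_atBot.comp h1
    have := h2.const_mul M
    simpa using this
  have hge : ∀ᶠ t in atTop, 0 ≤ V t := by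
    filter_upwards [eventually_ge_atTop (0 : ℝ)] with t ht using hVnn t ht
  have hle : ∀ᶠ t in atTop, V t ≤ M * Real.exp (lam * t) := by
    filter_upwards [eventually_ge_atTop (0 : ℝ)] with t ht using hbound t ht
  exact squeeze_zero' hge hle hlim
end
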